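/- arXiv:1805.07562 — 3 statements merged into one kernel-verified Lean document; each statement's English description precedes it below -/
import Mathlib

section
/- Let H be a separable real Hilbert space, and let (T_n) be a sequence of bounded linear operators on H that converges to the identity in the strong operator topology. Suppose V is a reflexive Banach space densely and compactly embedded in H, and suppose the extensions of T_n to V' satisfy sup_n ‖T_n‖_{L(V')} < ∞. Then the sequence of adjoint operators (T_n^*) maps V into V with ‖T_n^* x‖_V ≤ N ‖x‖_V for N = sup_n ‖T_n‖_{L(V')}, and T_n^* converges to the identity in the strong operator topology of H. -/
open Filter Topology RealInnerProductSpace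

/-- the adjoints `Tₙ*` map `V` into `V` with `‖Tₙ* x‖_V ≤ N ‖x‖_V`,
and converge to the identity in the strong operator topology of `H`. -/
theorem stmt_0
    {H V : Type*}
    [NormedAddCommGroup H] [InnerProductSpace ℝ H] [CompleteSpace H]
    [TopologicalSpace.SeparableSpace H]
    [NormedAddCommGroup V] [InnerProductSpace ℝ V] [CompleteSpace V]
    (i : V →L[ℝ] H) (hi_inj : Function.Injective i) (hi_dense : DenseRange i)
    (hi_compact : IsCompactOperator i)
    -- the embedding `H ↪ V'` of the Gelfand triple
    (e : H →L[ℝ] (V →L[ℝ] ℝ)) (he : ∀ (h : H) (v : V), e h v = ⟪i v, h⟫)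
    (T : ℕ → H →L[ℝ] H)
    (hT : ∀ x : H, Tendsto (fun n => T n x) atTop (𝓝 x))
    -- the extensions of `Tₙ` to `V'`
    (S : ℕ → (V →L[ℝ] ℝ) →L[ℝ] (V →L[ℝ] ℝ))
    (hext : ∀ n (h : H), S n (e h) = e (T n h))
    (N : ℝ) (hN : ∀ n, ‖S n‖ ≤ N) :
    (∀ n (v : V), ∃ w : V,
        i w = ContinuousLinearMap.adjoint (T n) (i v) ∧ ‖w‖ ≤ N * ‖v‖) ∧
      ∀ x : H, Tendsto (fun n => ContinuousLinearMap.adjoint (T n) x) atTop (𝓝 x) := by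
  have hN0 : 0 ≤ N := le_trans (norm_nonneg (S 0)) (hN 0)
  -- Part 1
  have part1 : ∀ n (v : V), ∃ w : V,
      i w = ContinuousLinearMap.adjoint (T n) (i v) ∧ ‖w‖ ≤ N * ‖v‖ := by
    intro n v
    set D := InnerProductSpace.toDual ℝ V with hD
    -- the functional `f ↦ (S n f) v` on `V'`, pulled back to `V` via Riesz
    let g : V →L[ℝ] ℝ :=
      (ContinuousLinearMap.apply ℝ ℝ v).comp
        ((S n).comp D.toContinuousLinearEquiv.toContinuousLinearMap)
    have hg_apply : ∀ u : V, g u = S n (D u) v := fun u => rfl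
    set w := D.symm g with hw
    have hDw : ∀ u : V, ⟪w, u⟫ = g u := by
      intro u
      have : D w = g := D.apply_symm_apply g
      rw [← this, InnerProductSpace.toDual_apply_apply]
    have hfw : ∀ f : V →L[ℝ] ℝ, f w = S n f v := by
      intro f
      have h1 : f w = (D (D.symm f)) w := by rw [D.apply_symm_apply]
      rw [h1, InnerProductSpace.toDual_apply_apply, real_inner_comm, hDw, hg_apply,
        D.apply_symm_apply]
    refine ⟨w, ?_, ?_⟩
    · apply ext_inner_right ℝ
      intro h
      have h1 : ⟪i w, h⟫ = (e h) w := (he h w).symm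
      rw [h1, hfw, hext, he, ContinuousLinearMap.adjoint_inner_left]
    · have hgnorm : ‖g‖ ≤ N * ‖v‖ := by
        apply ContinuousLinearMap.opNorm_le_bound _ (mul_nonneg hN0 (norm_nonneg v))
        intro u
        rw [hg_apply]
        calc ‖S n (D u) v‖ ≤ ‖S n (D u)‖ * ‖v‖ := (S n (D u)).le_opNorm v
          _ ≤ (‖S n‖ * ‖D u‖) * ‖v‖ :=
            mul_le_mul_of_nonneg_right ((S n).le_opNorm (D u)) (norm_nonneg v)
          _ ≤ (N * ‖u‖) * ‖v‖ := by
            rw [D.norm_map]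
            exact mul_le_mul_of_nonneg_right
              (mul_le_mul_of_nonneg_right (hN n) (norm_nonneg u)) (norm_nonneg v)
          _ = N * ‖v‖ * ‖u‖ := by ring
      calc ‖w‖ = ‖g‖ := D.symm.norm_map g
        _ ≤ N * ‖v‖ := hgnorm
  refine ⟨part1, ?_⟩
  -- uniform bound on `‖T n‖` via Banach–Steinhaus
  obtain ⟨C₀, hC₀⟩ : ∃ C', ∀ n, ‖T n‖ ≤ C' := by
    apply banach_steinhaus
    intro x
    obtain ⟨c, hc⟩ := ((hT x).norm.bddAbove_range)
    exact ⟨c, fun n => hc (Set.mem_range_self n)⟩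
  set C := max C₀ 0 with hC
  have hC0 : 0 ≤ C := le_max_right _ _
  have hCn : ∀ n, ‖T n‖ ≤ C := fun n => le_trans (hC₀ n) (le_max_left _ _)
  have hadj_norm : ∀ n, ‖ContinuousLinearMap.adjoint (T n)‖ ≤ C := by
    intro n
    rw [LinearIsometryEquiv.norm_map ContinuousLinearMap.adjoint (T n)]
    exact hCn n
  -- strong convergence on the range of `i`
  have key : ∀ v : V,
      Tendsto (fun n => ContinuousLinearMap.adjoint (T n) (i v)) atTop (𝓝 (i v)) := by
    intro v
    set y : ℕ → H := fun n => ContinuousLinearMap.adjoint (T n) (i v) with hy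
    -- weak convergence
    have hweak : ∀ h : H, Tendsto (fun n => ⟪y n, h⟫) atTop (𝓝 ⟪i v, h⟫) := by
      intro h
      have h1 : ∀ n, ⟪y n, h⟫ = ⟪i v, T n h⟫ := fun n =>
        ContinuousLinearMap.adjoint_inner_left (T n) h (i v)
      simp only [h1]
      exact tendsto_const_nhds.inner (hT h)
    -- the sequence lives in a compact set
    have hKcpt : IsCompact (closure (i '' Metric.closedBall 0 (N * ‖v‖))) :=
      hi_compact.isCompact_closure_image_of_bounded
        (Metric.isBounded_closedBall)
    have hmem : ∀ n, y n ∈ closure (i '' Metric.closedBall 0 (N * ‖v‖)) := by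
      intro n
      obtain ⟨w, hw1, hw2⟩ := part1 n v
      apply subset_closure
      exact ⟨w, by simpa [Metric.mem_closedBall, dist_zero_right] using hw2, hw1⟩
    apply tendsto_of_subseq_tendsto
    intro ns hns
    obtain ⟨z, _, ms, hms_mono, hms_tendsto⟩ :=
      hKcpt.tendsto_subseq (fun k => hmem (ns k))
    have hz : z = i v := by
      apply ext_inner_right ℝ
      intro h
      have h1 : Tendsto (fun k => ⟪y (ns (ms k)), h⟫) atTop (𝓝 ⟪z, h⟫) :=
        hms_tendsto.inner tendsto_const_nhds
      have h2 : Tendsto (fun k => ⟪y (ns (ms k)), h⟫) atTop (𝓝 ⟪i v, h⟫) :=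
        (hweak h).comp (hns.comp hms_mono.tendsto_atTop)
      exact tendsto_nhds_unique h1 h2
    exact ⟨ms, hz ▸ hms_tendsto⟩
  -- extend to all of `H` by density and the uniform bound
  intro x
  rw [Metric.tendsto_atTop]
  intro ε hε
  have hC1 : (0:ℝ) < C + 1 := by linarith
  obtain ⟨v, hv⟩ := hi_dense.exists_dist_lt x (div_pos (half_pos hε) hC1)
  have hv' : ‖x - i v‖ < ε / 2 / (C + 1) := by
    rwa [← dist_eq_norm]
  obtain ⟨n0, hn0⟩ := (Metric.tendsto_atTop.1 (key v)) (ε / 2) (half_pos hε)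
  refine ⟨n0, fun n hn => ?_⟩
  have h1 : dist (ContinuousLinearMap.adjoint (T n) x) x
      ≤ ‖ContinuousLinearMap.adjoint (T n) (x - i v)‖
        + dist (ContinuousLinearMap.adjoint (T n) (i v)) (i v)
        + ‖i v - x‖ := by
    rw [dist_eq_norm, dist_eq_norm]
    calc ‖ContinuousLinearMap.adjoint (T n) x - x‖
        = ‖(ContinuousLinearMap.adjoint (T n) (x - i v))
            + (ContinuousLinearMap.adjoint (T n) (i v) - i v) + (i v - x)‖ := by
          rw [map_sub]; congr 1; abel
      _ ≤ ‖ContinuousLinearMap.adjoint (T n) (x - i v)‖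
            + ‖ContinuousLinearMap.adjoint (T n) (i v) - i v‖ + ‖i v - x‖ := by
          exact norm_add₃_le
  have h2 : ‖ContinuousLinearMap.adjoint (T n) (x - i v)‖ ≤ C * ‖x - i v‖ :=
    le_trans ((ContinuousLinearMap.adjoint (T n)).le_opNorm (x - i v))
      (mul_le_mul_of_nonneg_right (hadj_norm n) (norm_nonneg _))
  have h3 : ‖i v - x‖ = ‖x - i v‖ := norm_sub_rev _ _
  have h4 : C * ‖x - i v‖ + ‖x - i v‖ < ε / 2 := by
    have : (C + 1) * ‖x - i v‖ < (C + 1) * (ε / 2 / (C + 1)) :=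
      mul_lt_mul_of_pos_left hv' hC1
    rw [mul_div_cancel₀ _ (ne_of_gt hC1)] at this
    linarith
  have h5 : dist (ContinuousLinearMap.adjoint (T n) (i v)) (i v) < ε / 2 := hn0 n hn
  linarith
end

section
/- Let E be a reflexive Banach space densely and continuously embedded in a Banach space F. If u : [0,T] → F is weakly càdlàg with values in F, u ∈ L^∞(0,T;E), and u(T) ∈ E, and if moreover there exists a constant M such that ‖u(t)‖_E ≤ M for all t ∈ [0,T], then u is weakly càdlàg as an E-valued function: for every t ∈ [0,T) and every sequence t_n ↓ t, u(t_n) → u(t) weakly in E, and for every t ∈ (0,T] left limits exist weakly in E. -/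
open Filter Topology

section Aux

variable {E F : Type*}
    [NormedAddCommGroup E] [NormedSpace ℝ E]
    [NormedAddCommGroup F] [NormedSpace ℝ F]

/-- If `E` is reflexive and `j : E →L F` is injective, then the range of the adjoint map
`φ ↦ φ ∘ j` is dense in the dual of `E`. -/
lemma aux_dense_adjoint_range
    (hrefl : Function.Surjective (NormedSpace.inclusionInDoubleDual ℝ E))
    (j : E →L[ℝ] F) (hj_inj : Function.Injective j) :
    ∀ ψ : E →L[ℝ] ℝ, ∀ ε > 0, ∃ φ : F →L[ℝ] ℝ, ‖ψ - φ.comp j‖ < ε := by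
  set m : (F →L[ℝ] ℝ) →ₗ[ℝ] (E →L[ℝ] ℝ) :=
    { toFun := fun φ => φ.comp j
      map_add' := fun φ₁ φ₂ => by ext x; simp
      map_smul' := fun c φ => by ext x; simp } with hm
  set S : Submodule ℝ (E →L[ℝ] ℝ) := LinearMap.range m with hS
  have hmem : ∀ ψ : E →L[ℝ] ℝ, ψ ∈ S.topologicalClosure := by
    intro ψ
    by_contra hψ
    obtain ⟨f, c, hfa, hfψ⟩ := geometric_hahn_banach_closed_point
      (S.topologicalClosure.convex) (S.isClosed_topologicalClosure) hψ
    have h0 : ∀ a ∈ S.topologicalClosure, f a = 0 := by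
      intro a ha
      by_contra hne
      have h1 := hfa ((c / f a) • a) (Submodule.smul_mem _ _ ha)
      rw [map_smul, smul_eq_mul, div_mul_cancel₀ _ hne] at h1
      exact lt_irrefl _ h1
    obtain ⟨x, hx⟩ := hrefl f
    have hjx : j x = 0 := by
      apply NormedSpace.eq_zero_of_forall_dual_eq_zero ℝ
      intro φ
      have hφS : (φ.comp j : E →L[ℝ] ℝ) ∈ S.topologicalClosure :=
        S.le_topologicalClosure ⟨φ, rfl⟩
      have := h0 _ hφS
      rw [← hx] at this
      simpa using this
    have hx0 : x = 0 := hj_inj (by simpa using hjx)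
    have hf0 : f = 0 := by rw [← hx, hx0, map_zero]
    have h00 : f 0 = 0 := map_zero f
    have hc : f (0 : E →L[ℝ] ℝ) < c := hfa 0 (Submodule.zero_mem _)
    rw [h00] at hc
    rw [hf0] at hfψ
    simp at hfψ
    linarith
  intro ψ ε hε
  have hψc : ψ ∈ closure (S : Set (E →L[ℝ] ℝ)) := by
    rw [← Submodule.topologicalClosure_coe]; exact hmem ψ
  obtain ⟨b, hbS, hbd⟩ := Metric.mem_closure_iff.1 hψc ε hε
  obtain ⟨φ, hφ⟩ := hbS
  exact ⟨φ, by rw [← dist_eq_norm]; rw [hm] at hφ; simp at hφ; rw [hφ]; exact hbd⟩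

lemma aux_approx (ψ : E →L[ℝ] ℝ) (φ : F →L[ℝ] ℝ) (j : E →L[ℝ] F) {x : E} {M : ℝ}
    (hx : ‖x‖ ≤ M) : |ψ x - φ (j x)| ≤ ‖ψ - φ.comp j‖ * M := by
  have h1 : (ψ - φ.comp j) x = ψ x - φ (j x) := by simp
  have h2 := (ψ - φ.comp j).le_opNorm x
  rw [h1] at h2
  calc |ψ x - φ (j x)| ≤ ‖ψ - φ.comp j‖ * ‖x‖ := h2
    _ ≤ ‖ψ - φ.comp j‖ * M := by
        exact mul_le_mul_of_nonneg_left hx (norm_nonneg _)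

end Aux

/-- if `u` is weakly càdlàg with values in `F` and uniformly bounded in the
`E`-norm, then `u` is weakly càdlàg with values in `E`. Reflexivity of `E` is encoded as
surjectivity of the canonical inclusion into the double dual. -/
theorem stmt_1
    {E F : Type*}
    [NormedAddCommGroup E] [NormedSpace ℝ E]
    [NormedAddCommGroup F] [NormedSpace ℝ F]
    (hrefl : Function.Surjective (NormedSpace.inclusionInDoubleDual ℝ E))
    (j : E →L[ℝ] F) (hj_inj : Function.Injective j) (hj_dense : DenseRange j)
    (T : ℝ) (hT : 0 < T)
    (u : ℝ → E) (M : ℝ) (hM : ∀ t ∈ Set.Icc (0 : ℝ) T, ‖u t‖ ≤ M)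
    -- `u` is weakly càdlàg with values in `F`
    (hcadF : ∀ φ : F →L[ℝ] ℝ,
      (∀ t ∈ Set.Ico (0 : ℝ) T, Tendsto (fun s => φ (j (u s)))
          (𝓝[Set.Ioc t T] t) (𝓝 (φ (j (u t))))) ∧
      (∀ t ∈ Set.Ioc (0 : ℝ) T, ∃ l : ℝ, Tendsto (fun s => φ (j (u s)))
          (𝓝[Set.Ico 0 t] t) (𝓝 l))) :
    -- `u` is weakly càdlàg with values in `E`
    (∀ t ∈ Set.Ico (0 : ℝ) T, ∀ ψ : E →L[ℝ] ℝ,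
        Tendsto (fun s => ψ (u s)) (𝓝[Set.Ioc t T] t) (𝓝 (ψ (u t)))) ∧
      ∀ t ∈ Set.Ioc (0 : ℝ) T, ∃ l : E, ∀ ψ : E →L[ℝ] ℝ,
        Tendsto (fun s => ψ (u s)) (𝓝[Set.Ico 0 t] t) (𝓝 (ψ l)) := by
  have hdense := aux_dense_adjoint_range hrefl j hj_inj
  have hM0 : 0 ≤ M := le_trans (norm_nonneg _) (hM 0 ⟨le_refl 0, hT.le⟩)
  constructor
  · -- right continuity
    intro t ht ψ
    rw [Metric.tendsto_nhdsWithin_nhds]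
    intro ε hε
    have hδ : (0:ℝ) < ε / (3 * (M + 1)) := by positivity
    obtain ⟨φ, hφ⟩ := hdense ψ _ hδ
    have hbound : ‖ψ - φ.comp j‖ * M ≤ ε / 3 := by
      have h1 : ‖ψ - φ.comp j‖ * M ≤ (ε / (3 * (M + 1))) * (M + 1) := by
        apply mul_le_mul hφ.le (by linarith) hM0 hδ.le
      have h2 : (ε / (3 * (M + 1))) * (M + 1) = ε / 3 := by
        field_simp
      rw [h2] at h1
      exact h1
    have htend := (hcadF φ).1 t ht
    rw [Metric.tendsto_nhdsWithin_nhds] at htend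
    obtain ⟨δ, hδ0, hδh⟩ := htend (ε / 3) (by linarith)
    refine ⟨δ, hδ0, ?_⟩
    intro s hs hsd
    have hsI : s ∈ Set.Icc (0:ℝ) T := ⟨le_trans ht.1 hs.1.le, hs.2⟩
    have htI : t ∈ Set.Icc (0:ℝ) T := ⟨ht.1, ht.2.le⟩
    have h1 : |ψ (u s) - φ (j (u s))| ≤ ‖ψ - φ.comp j‖ * M :=
      aux_approx ψ φ j (hM s hsI)
    have h2 : |ψ (u t) - φ (j (u t))| ≤ ‖ψ - φ.comp j‖ * M :=
      aux_approx ψ φ j (hM t htI)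
    have h3 := hδh hs hsd
    rw [Real.dist_eq] at h3 ⊢
    have : ψ (u s) - ψ (u t) =
        (ψ (u s) - φ (j (u s))) + (φ (j (u s)) - φ (j (u t))) + (φ (j (u t)) - ψ (u t)) := by
      ring
    rw [this]
    calc |(ψ (u s) - φ (j (u s))) + (φ (j (u s)) - φ (j (u t))) + (φ (j (u t)) - ψ (u t))|
        ≤ |ψ (u s) - φ (j (u s))| + |φ (j (u s)) - φ (j (u t))| + |φ (j (u t)) - ψ (u t)| := by
          have := abs_add_le ((ψ (u s) - φ (j (u s))) + (φ (j (u s)) - φ (j (u t))))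
            ((φ (j (u t)) - ψ (u t)))
          have h4 := abs_add_le (ψ (u s) - φ (j (u s))) (φ (j (u s)) - φ (j (u t)))
          linarith
      _ < ε := by
          rw [abs_sub_comm (ψ (u t))] at h2
          linarith
  · -- left limits
    intro t ht
    set l : Filter ℝ := 𝓝[Set.Ico 0 t] t with hl
    have hne : l.NeBot := by
      rw [hl, ← mem_closure_iff_nhdsWithin_neBot, closure_Ico (ne_of_lt ht.1)]
      exact ⟨ht.1.le, le_refl t⟩
    have hsub : Set.Ico (0:ℝ) t ⊆ Set.Icc 0 T := fun x hx =>
      ⟨hx.1, le_trans hx.2.le ht.2⟩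
    -- Step 1: each ψ (u ·) converges along l
    have hstep : ∀ ψ : E →L[ℝ] ℝ, ∃ c : ℝ, Tendsto (fun s => ψ (u s)) l (𝓝 c) := by
      intro ψ
      rw [← cauchy_map_iff_exists_tendsto]
      rw [Metric.cauchy_iff]
      constructor
      · exact map_neBot
      intro ε hε
      have hδ : (0:ℝ) < ε / (6 * (M + 1)) := by positivity
      obtain ⟨φ, hφ⟩ := hdense ψ _ hδ
      have hbound : ‖ψ - φ.comp j‖ * M ≤ ε / 6 := by
        have h1 : ‖ψ - φ.comp j‖ * M ≤ (ε / (6 * (M + 1))) * (M + 1) := by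
          apply mul_le_mul hφ.le (by linarith) hM0 hδ.le
        have h2 : (ε / (6 * (M + 1))) * (M + 1) = ε / 6 := by
          field_simp
        linarith [h2 ▸ h1]
      obtain ⟨lφ, hlφ⟩ := (hcadF φ).2 t ht
      have hev1 : ∀ᶠ s in l, dist (φ (j (u s))) lφ < ε / 6 :=
        (Metric.tendsto_nhds.1 hlφ) _ (by linarith)
      have hev2 : ∀ᶠ s in l, s ∈ Set.Ico (0:ℝ) t := eventually_mem_nhdsWithin
      obtain ⟨A, hAl, hA⟩ := ((hev1.and hev2)).exists_mem
      refine ⟨(fun s => ψ (u s)) '' A, image_mem_map hAl, ?_⟩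
      rintro _ ⟨x, hx, rfl⟩ _ ⟨y, hy, rfl⟩
      obtain ⟨hx1, hx2⟩ := hA x hx
      obtain ⟨hy1, hy2⟩ := hA y hy
      have hb1 : |ψ (u x) - φ (j (u x))| ≤ ‖ψ - φ.comp j‖ * M :=
        aux_approx ψ φ j (hM x (hsub hx2))
      have hb2 : |ψ (u y) - φ (j (u y))| ≤ ‖ψ - φ.comp j‖ * M :=
        aux_approx ψ φ j (hM y (hsub hy2))
      rw [Real.dist_eq] at hx1 hy1 ⊢
      have heq : ψ (u x) - ψ (u y) = (ψ (u x) - φ (j (u x))) + ((φ (j (u x)) - lφ)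
          - (φ (j (u y)) - lφ)) + (φ (j (u y)) - ψ (u y)) := by ring
      rw [heq]
      have ha1 := abs_add_le ((ψ (u x) - φ (j (u x))) + ((φ (j (u x)) - lφ) - (φ (j (u y)) - lφ)))
        (φ (j (u y)) - ψ (u y))
      have ha2 := abs_add_le (ψ (u x) - φ (j (u x))) ((φ (j (u x)) - lφ) - (φ (j (u y)) - lφ))
      have ha3 := abs_sub (φ (j (u x)) - lφ) (φ (j (u y)) - lφ)
      rw [abs_sub_comm (ψ (u y))] at hb2
      linarith
    -- Step 2: package the limits into an element of the double dual
    classical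
    set L : (E →L[ℝ] ℝ) → ℝ := fun ψ => Classical.choose (hstep ψ) with hLdef
    have hL : ∀ ψ : E →L[ℝ] ℝ, Tendsto (fun s => ψ (u s)) l (𝓝 (L ψ)) :=
      fun ψ => Classical.choose_spec (hstep ψ)
    have hLadd : ∀ ψ₁ ψ₂ : E →L[ℝ] ℝ, L (ψ₁ + ψ₂) = L ψ₁ + L ψ₂ := by
      intro ψ₁ ψ₂
      have h1 : Tendsto (fun s => (ψ₁ + ψ₂) (u s)) l (𝓝 (L ψ₁ + L ψ₂)) := by
        have := (hL ψ₁).add (hL ψ₂)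
        simpa using this
      exact tendsto_nhds_unique (hL (ψ₁ + ψ₂)) h1
    have hLsmul : ∀ (c : ℝ) (ψ : E →L[ℝ] ℝ), L (c • ψ) = c * L ψ := by
      intro c ψ
      have h1 : Tendsto (fun s => (c • ψ) (u s)) l (𝓝 (c * L ψ)) := by
        have := (hL ψ).const_mul c
        simpa using this
      exact tendsto_nhds_unique (hL (c • ψ)) h1
    have hLbound : ∀ ψ : E →L[ℝ] ℝ, ‖L ψ‖ ≤ M * ‖ψ‖ := by
      intro ψ
      have hev : ∀ᶠ s in l, |ψ (u s)| ≤ M * ‖ψ‖ := by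
        filter_upwards [eventually_mem_nhdsWithin] with s hs
        have := ψ.le_opNorm (u s)
        have hb := hM s (hsub hs)
        calc |ψ (u s)| = ‖ψ (u s)‖ := (Real.norm_eq_abs _).symm
          _ ≤ ‖ψ‖ * ‖u s‖ := this
          _ ≤ ‖ψ‖ * M := mul_le_mul_of_nonneg_left hb (norm_nonneg _)
          _ = M * ‖ψ‖ := mul_comm _ _
      have htendabs : Tendsto (fun s => |ψ (u s)|) l (𝓝 |L ψ|) := (hL ψ).abs
      rw [Real.norm_eq_abs]
      exact le_of_tendsto htendabs hev
    set Llin : (E →L[ℝ] ℝ) →ₗ[ℝ] ℝ :=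
      { toFun := L
        map_add' := hLadd
        map_smul' := fun c ψ => by simp [hLsmul c ψ] } with hLlin
    set Φ : StrongDual ℝ (StrongDual ℝ E) :=
      LinearMap.mkContinuous Llin M (fun ψ => hLbound ψ) with hΦ
    obtain ⟨x, hx⟩ := hrefl Φ
    refine ⟨x, fun ψ => ?_⟩
    have hψx : ψ x = L ψ := by
      have h1 : NormedSpace.inclusionInDoubleDual ℝ E x ψ = Φ ψ := by rw [hx]
      have h2 : NormedSpace.inclusionInDoubleDual ℝ E x ψ = ψ x := rfl
      have h3 : Φ ψ = L ψ := rfl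
      rw [h2, h3] at h1
      exact h1
    rw [hψx]
    exact hL ψ
end

section
/- Let E be a reflexive Banach space densely and continuously embedded in a Banach space F. Then L^∞(0,T;E) ∩ D_w([0,T];F) = D_w([0,T];E), i.e., a function u: [0,T] → F that is weakly càdlàg in F and essentially bounded with values in E (after possibly modifying its value at T so that u(T) ∈ E) is weakly càdlàg with values in E; in particular its range u([0,T]) is bounded in E. -/
open Filter Topology MeasureTheory NormedSpace

/-- Key weak-compactness lemma: if `v` is eventually bounded by `M` along a nontrivial
filter `L` and `φ (j (v s))` converges for every functional `φ` on `F`, then `v`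
converges weakly in `E` to some `v₀` with `‖v₀‖ ≤ M`. -/
lemma weak_limit_key {E F : Type*}
    [NormedAddCommGroup E] [NormedSpace ℝ E]
    [NormedAddCommGroup F] [NormedSpace ℝ F]
    (hrefl : Function.Surjective (NormedSpace.inclusionInDoubleDual ℝ E))
    (j : E →L[ℝ] F) (hj_inj : Function.Injective j)
    (L : Filter ℝ) [L.NeBot] (v : ℝ → E) (M : ℝ)
    (hv : ∀ᶠ s in L, ‖v s‖ ≤ M)
    (h : ∀ φ : F →L[ℝ] ℝ, ∃ c : ℝ, Tendsto (fun s => φ (j (v s))) L (𝓝 c)) :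
    ∃ v₀ : E, ‖v₀‖ ≤ M ∧ ∀ ψ : E →L[ℝ] ℝ, Tendsto (fun s => ψ (v s)) L (𝓝 (ψ v₀)) := by
  classical
  set ι : E →L[ℝ] StrongDual ℝ (StrongDual ℝ E) := NormedSpace.inclusionInDoubleDual ℝ E with hι
  set x : ℝ → WeakDual ℝ (StrongDual ℝ E) := fun s => StrongDual.toWeakDual (ι (v s)) with hx
  set K : Set (WeakDual ℝ (StrongDual ℝ E)) :=
    WeakDual.toStrongDual ⁻¹' Metric.closedBall (0 : StrongDual ℝ (StrongDual ℝ E)) M with hK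
  have hKcomp : IsCompact K := WeakDual.isCompact_closedBall (𝕜 := ℝ) (E := StrongDual ℝ E) 0 M
  choose c hc using h
  have hmemK : ∀ᶠ s in L, x s ∈ K := by
    filter_upwards [hv] with s hs
    simp only [hK, Set.mem_preimage, Metric.mem_closedBall, dist_zero_right]
    calc dist (WeakDual.toStrongDual (x s)) 0 = ‖ι (v s)‖ := dist_zero_right (WeakDual.toStrongDual (x s))
      _ ≤ ‖v s‖ := by
          have := (NormedSpace.inclusionInDoubleDualLi ℝ (E := E)).norm_map (v s)
          exact le_of_eq this
      _ ≤ M := hs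
  have claim : ∀ g : Ultrafilter (WeakDual ℝ (StrongDual ℝ E)), ↑g ≤ L.map x →
      ∃ w : E, Tendsto id (↑g) (𝓝 (StrongDual.toWeakDual (ι w))) ∧
        ‖w‖ ≤ M ∧ ∀ φ : F →L[ℝ] ℝ, φ (j w) = c φ := by
    intro g hg
    have hgK : ↑g ≤ Filter.principal K := by
      rw [Filter.le_principal_iff]
      exact hg (Filter.mem_map.2 hmemK)
    obtain ⟨a, haK, hga⟩ := hKcomp.ultrafilter_le_nhds g hgK
    obtain ⟨w, hw⟩ := hrefl (WeakDual.toStrongDual a)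
    have haw : a = StrongDual.toWeakDual (ι w) := by
      have : StrongDual.toWeakDual (WeakDual.toStrongDual a) = a :=
        StrongDual.toWeakDual.apply_symm_apply a
      rw [← this, hw]
    refine ⟨w, by rw [← haw]; exact Filter.tendsto_id'.2 hga, ?_, ?_⟩
    · have h1 : ‖w‖ = ‖ι w‖ :=
        ((NormedSpace.inclusionInDoubleDualLi ℝ (E := E)).norm_map w).symm
      have h2 : ‖WeakDual.toStrongDual a‖ ≤ M := by
        have h : dist (WeakDual.toStrongDual a) 0 ≤ M := haK; exact (dist_zero_right (WeakDual.toStrongDual a)).symm.trans_le h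
      rw [h1, hw]; exact h2
    · intro φ
      have hcont : Continuous fun b : WeakDual ℝ (StrongDual ℝ E) => b (φ.comp j) :=
        WeakDual.eval_continuous _
      have h1 : Tendsto (fun b : WeakDual ℝ (StrongDual ℝ E) => b (φ.comp j)) (↑g)
          (𝓝 (a (φ.comp j))) := (hcont.tendsto a).comp hga
      have h2 : Tendsto (fun b : WeakDual ℝ (StrongDual ℝ E) => b (φ.comp j)) (↑g)
          (𝓝 (c φ)) := by
        refine Tendsto.mono_left ?_ hg
        have : (fun s => φ (j (v s))) = (fun b : WeakDual ℝ (StrongDual ℝ E) => b (φ.comp j)) ∘ x :=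
          rfl
        rw [Filter.tendsto_map'_iff]
        exact this ▸ hc φ
      have := tendsto_nhds_unique h1 h2
      rw [haw] at this
      exact this
  obtain ⟨g₀, hg₀⟩ := Filter.exists_ultrafilter_le (L.map x)
  obtain ⟨w₀, -, hw₀M, hw₀c⟩ := claim g₀ hg₀
  have hxconv : Tendsto x L (𝓝 (StrongDual.toWeakDual (ι w₀))) := by
    rw [Filter.tendsto_iff_ultrafilter]
    intro g hgL
    obtain ⟨w, hw1, -, hwc⟩ := claim (g.map x) (Filter.map_mono hgL)
    have hww : w = w₀ := by
      apply hj_inj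
      rw [NormedSpace.eq_iff_forall_dual_eq ℝ]
      intro φ
      rw [hwc φ, hw₀c φ]
    rw [hww] at hw1
    rwa [Filter.tendsto_id'] at hw1
  refine ⟨w₀, hw₀M, fun ψ => ?_⟩
  have hcont : Continuous fun b : WeakDual ℝ (StrongDual ℝ E) => b ψ := WeakDual.eval_continuous _
  exact (hcont.tendsto _).comp hxconv

/-- A point `t ∈ [0,T)` is in the closure of `(t,T] ∩ S` when `S` is conull
in `[0,T]`. -/
lemma mem_closure_Ioc_inter {T t : ℝ} (hT0 : 0 ≤ t) (htT : t < T) {S : Set ℝ}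
    (hS : volume.restrict (Set.Icc (0 : ℝ) T) Sᶜ = 0) :
    t ∈ closure (Set.Ioc t T ∩ S) := by
  rw [Metric.mem_closure_iff]
  intro ε hε
  set b := min (t + ε / 2) T with hb
  have htb : t < b := lt_min (by linarith) htT
  have hsub : Set.Ioc t b ⊆ Set.Icc 0 T := fun s hs =>
    ⟨le_trans hT0 (le_of_lt hs.1), le_trans hs.2 (min_le_right _ _)⟩
  have hne : (Set.Ioc t b ∩ S).Nonempty := by
    by_contra hcon
    rw [Set.not_nonempty_iff_eq_empty] at hcon
    have h0 : volume (Set.Ioc t b ∩ Sᶜ) = 0 := by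
      have hsub2 : Set.Ioc t b ∩ Sᶜ ⊆ Sᶜ ∩ Set.Icc 0 T := fun s hs => ⟨hs.2, hsub hs.1⟩
      have h1 : volume (Sᶜ ∩ Set.Icc (0 : ℝ) T) = 0 := by
        rwa [Measure.restrict_apply' measurableSet_Icc] at hS
      exact measure_mono_null hsub2 h1
    have hle := measure_le_inter_add_diff volume (Set.Ioc t b) S
    rw [Set.diff_eq, hcon, measure_empty, zero_add, h0, Real.volume_Ioc] at hle
    have hpos : (0 : ℝ) < b - t := by linarith
    simp [ENNReal.ofReal_eq_zero, not_le.2 hpos] at hle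
  obtain ⟨s, hs1, hs2⟩ := hne
  refine ⟨s, ⟨⟨hs1.1, le_trans hs1.2 (min_le_right _ _)⟩, hs2⟩, ?_⟩
  have h1 : s ≤ t + ε / 2 := le_trans hs1.2 (min_le_left _ _)
  have : dist t s = s - t := by
    rw [dist_comm, Real.dist_eq, abs_of_nonneg (by linarith [hs1.1])]
  rw [this]; linarith

/-- `L^∞(0,T;E) ∩ D_w([0,T];F) = D_w([0,T];E)`: a function `u : [0,T] → F`
that is weakly càdlàg in `F`, essentially bounded with values in `E`, and with `u T ∈ E`,
takes values in `E` on all of `[0,T]`, is weakly càdlàg with values in `E`, and its range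
is bounded in `E`. Reflexivity of `E` is encoded as surjectivity of the canonical
inclusion into the double dual. -/
theorem stmt_2
    {E F : Type*}
    [NormedAddCommGroup E] [NormedSpace ℝ E]
    [NormedAddCommGroup F] [NormedSpace ℝ F]
    (hrefl : Function.Surjective (NormedSpace.inclusionInDoubleDual ℝ E))
    (j : E →L[ℝ] F) (hj_inj : Function.Injective j) (hj_dense : DenseRange j)
    (T : ℝ) (hT : 0 < T)
    (u : ℝ → F)
    -- `u` is weakly càdlàg with values in `F`
    (hcadF : ∀ φ : F →L[ℝ] ℝ,
      (∀ t ∈ Set.Ico (0 : ℝ) T, Tendsto (fun s => φ (u s))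
          (𝓝[Set.Ioc t T] t) (𝓝 (φ (u t)))) ∧
      (∀ t ∈ Set.Ioc (0 : ℝ) T, ∃ l : ℝ, Tendsto (fun s => φ (u s))
          (𝓝[Set.Ico 0 t] t) (𝓝 l)))
    -- `u ∈ L^∞(0,T;E)`
    (M : ℝ)
    (hbd : ∀ᵐ t ∂(volume.restrict (Set.Icc (0 : ℝ) T)), ∃ v : E, j v = u t ∧ ‖v‖ ≤ M)
    -- the value at `T` lies in `E`
    (huT : ∃ v : E, j v = u T) :
    ∃ (w : ℝ → E) (M' : ℝ),
      (∀ t ∈ Set.Icc (0 : ℝ) T, j (w t) = u t) ∧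
      (∀ t ∈ Set.Icc (0 : ℝ) T, ‖w t‖ ≤ M') ∧
      (∀ t ∈ Set.Ico (0 : ℝ) T, ∀ ψ : E →L[ℝ] ℝ,
        Tendsto (fun s => ψ (w s)) (𝓝[Set.Ioc t T] t) (𝓝 (ψ (w t)))) ∧
      (∀ t ∈ Set.Ioc (0 : ℝ) T, ∃ l : E, ∀ ψ : E →L[ℝ] ℝ,
        Tendsto (fun s => ψ (w s)) (𝓝[Set.Ico 0 t] t) (𝓝 (ψ l))) := by
  classical
  set S : Set ℝ := {s | ∃ v : E, j v = u s ∧ ‖v‖ ≤ M} with hS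
  have hSnull : volume.restrict (Set.Icc (0 : ℝ) T) Sᶜ = 0 := by
    have h := MeasureTheory.ae_iff.mp hbd
    simpa [hS, Set.compl_setOf] using h
  set vS : ℝ → E := fun s => if h : ∃ v : E, j v = u s ∧ ‖v‖ ≤ M then h.choose else 0 with hvS
  have hvS_spec : ∀ s ∈ S, j (vS s) = u s ∧ ‖vS s‖ ≤ M := by
    intro s hs
    have hs' : ∃ v : E, j v = u s ∧ ‖v‖ ≤ M := hs
    simp only [hvS]
    rw [dif_pos hs']
    exact hs'.choose_spec
  -- Step 1: `u t` lies in the image of the `M`-ball for every `t ∈ [0,T)`.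
  have step1 : ∀ t, 0 ≤ t → t < T → ∃ v : E, j v = u t ∧ ‖v‖ ≤ M := by
    intro t ht0 htT
    set L := 𝓝[Set.Ioc t T ∩ S] t with hL
    haveI : L.NeBot := mem_closure_iff_nhdsWithin_neBot.mp (mem_closure_Ioc_inter ht0 htT hSnull)
    have hmem : ∀ᶠ s in L, s ∈ Set.Ioc t T ∩ S := eventually_mem_nhdsWithin
    have hv : ∀ᶠ s in L, ‖vS s‖ ≤ M := by
      filter_upwards [hmem] with s hs using (hvS_spec s hs.2).2
    have hcong : ∀ φ : F →L[ℝ] ℝ, (fun s => φ (u s)) =ᶠ[L] fun s => φ (j (vS s)) := by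
      intro φ; filter_upwards [hmem] with s hs; rw [(hvS_spec s hs.2).1]
    have htd : ∀ φ : F →L[ℝ] ℝ, Tendsto (fun s => φ (j (vS s))) L (𝓝 (φ (u t))) := by
      intro φ
      exact Tendsto.congr' (hcong φ)
        (((hcadF φ).1 t ⟨ht0, htT⟩).mono_left (nhdsWithin_mono t Set.inter_subset_left))
    obtain ⟨v₀, hv₀M, hv₀⟩ := weak_limit_key hrefl j hj_inj L vS M hv (fun φ => ⟨_, htd φ⟩)
    refine ⟨v₀, ?_, hv₀M⟩
    rw [NormedSpace.eq_iff_forall_dual_eq ℝ]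
    intro φ
    have h1 : Tendsto (fun s => φ (j (vS s))) L (𝓝 (φ (j v₀))) := hv₀ (φ.comp j)
    exact tendsto_nhds_unique h1 (htd φ)
  set M' : ℝ := max M ‖huT.choose‖ with hM'
  have claim : ∀ t ∈ Set.Icc (0:ℝ) T, ∃ v : E, j v = u t ∧ ‖v‖ ≤ M' := by
    intro t ht
    rcases lt_or_eq_of_le ht.2 with hlt | heq
    · obtain ⟨v, hv1, hv2⟩ := step1 t ht.1 hlt
      exact ⟨v, hv1, le_trans hv2 (le_max_left _ _)⟩
    · subst heq
      exact ⟨huT.choose, huT.choose_spec, le_max_right _ _⟩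
  set w : ℝ → E := fun t => if h : ∃ v : E, j v = u t ∧ ‖v‖ ≤ M' then h.choose else 0 with hwdef
  have hw : ∀ t ∈ Set.Icc (0:ℝ) T, j (w t) = u t ∧ ‖w t‖ ≤ M' := by
    intro t ht
    have h := claim t ht
    simp only [hwdef]
    rw [dif_pos h]
    exact h.choose_spec
  refine ⟨w, M', fun t ht => (hw t ht).1, fun t ht => (hw t ht).2, ?_, ?_⟩
  · -- right continuity in `E`
    intro t ht ψ
    set L := 𝓝[Set.Ioc t T] t with hL
    haveI : L.NeBot := by
      refine mem_closure_iff_nhdsWithin_neBot.mp ?_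
      rw [closure_Ioc (ne_of_lt ht.2)]
      exact ⟨le_refl t, le_of_lt ht.2⟩
    have hmem : ∀ᶠ s in L, s ∈ Set.Icc (0:ℝ) T := by
      filter_upwards [eventually_mem_nhdsWithin] with s hs
      exact ⟨le_trans ht.1 (le_of_lt hs.1), hs.2⟩
    have hv : ∀ᶠ s in L, ‖w s‖ ≤ M' := by
      filter_upwards [hmem] with s hs using (hw s hs).2
    have hcong : ∀ φ : F →L[ℝ] ℝ, (fun s => φ (u s)) =ᶠ[L] fun s => φ (j (w s)) := by
      intro φ; filter_upwards [hmem] with s hs; rw [(hw s hs).1]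
    have htd : ∀ φ : F →L[ℝ] ℝ, Tendsto (fun s => φ (j (w s))) L (𝓝 (φ (u t))) :=
      fun φ => Tendsto.congr' (hcong φ) ((hcadF φ).1 t ht)
    obtain ⟨v₀, -, hv₀⟩ := weak_limit_key hrefl j hj_inj L w M' hv (fun φ => ⟨_, htd φ⟩)
    have hveq : v₀ = w t := by
      apply hj_inj
      rw [NormedSpace.eq_iff_forall_dual_eq ℝ]
      intro φ
      have h1 : Tendsto (fun s => φ (j (w s))) L (𝓝 (φ (j v₀))) := hv₀ (φ.comp j)
      have h3 := tendsto_nhds_unique h1 (htd φ)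
      have h4 : j (w t) = u t := (hw t ⟨ht.1, le_of_lt ht.2⟩).1
      rw [h3, ← h4]
    rw [← hveq]
    exact hv₀ ψ
  · -- left limits in `E`
    intro t ht
    set L := 𝓝[Set.Ico 0 t] t with hL
    haveI : L.NeBot := by
      refine mem_closure_iff_nhdsWithin_neBot.mp ?_
      rw [closure_Ico (ne_of_lt ht.1)]
      exact ⟨le_of_lt ht.1, le_refl t⟩
    have hmem : ∀ᶠ s in L, s ∈ Set.Icc (0:ℝ) T := by
      filter_upwards [eventually_mem_nhdsWithin] with s hs
      exact ⟨hs.1, le_trans (le_of_lt hs.2) ht.2⟩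
    have hv : ∀ᶠ s in L, ‖w s‖ ≤ M' := by
      filter_upwards [hmem] with s hs using (hw s hs).2
    have hcong : ∀ φ : F →L[ℝ] ℝ, (fun s => φ (u s)) =ᶠ[L] fun s => φ (j (w s)) := by
      intro φ; filter_upwards [hmem] with s hs; rw [(hw s hs).1]
    have h : ∀ φ : F →L[ℝ] ℝ, ∃ c, Tendsto (fun s => φ (j (w s))) L (𝓝 c) := by
      intro φ
      obtain ⟨l, hl⟩ := (hcadF φ).2 t ht
      exact ⟨l, Tendsto.congr' (hcong φ) hl⟩
    obtain ⟨v₀, -, hv₀⟩ := weak_limit_key hrefl j hj_inj L w M' hv h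
    exact ⟨v₀, hv₀⟩
end
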